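/- Let (Ω, ℱ, P) be a probability space with a filtration (ℱ_k)_{k=0}^{T}, let T ≥ 1 be an integer, and let A_0, …, A_{T−1} be events with A_k ∈ ℱ_{k+1}. Set p_k := P(A_k | ℱ_k), and suppose there is μ ∈ (0, 1] such that Σ_{k=0}^{T−1} p_k ≥ μT almost surely. Let X := Σ_{k=0}^{T−1} 1_{A_k}. Then for every s ∈ (0, 1), P(X ≤ (1−s)·μT) ≤ exp(−(s²/2)·μT). -/

import Mathlib

open MeasureTheory Real Finset

lemma chernoff_aux_int {Ω : Type*} {m0 : MeasurableSpace Ω} (Pr : Measure Ω)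
    [IsProbabilityMeasure Pr] (ℱ : Filtration ℕ m0)
    (ind : ℕ → Ω → ℝ) (hind_sm : ∀ k, StronglyMeasurable[ℱ (k + 1)] (ind k))
    (hind0 : ∀ k ω, 0 ≤ ind k ω) (hind1 : ∀ k ω, ind k ω ≤ 1)
    {s : ℝ} (hs0 : 0 < s) (hs1 : s < 1) (n : ℕ) :
    ∫ ω, (∏ k ∈ Finset.range n, (1 - s * ind k ω)) *
      Real.exp (s * ∑ k ∈ Finset.range n, (Pr[ind k | ℱ k]) ω) ∂Pr ≤ 1 := by
  -- basic facts
  have hind_int : ∀ k, Integrable (ind k) Pr := by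
    intro k
    refine Integrable.mono' (integrable_const (1:ℝ))
      ((hind_sm k).mono (ℱ.le _)).aestronglyMeasurable (ae_of_all _ fun ω => ?_)
    rw [Real.norm_eq_abs, abs_of_nonneg (hind0 k ω)]; exact hind1 k ω
  have hp_sm : ∀ k, StronglyMeasurable[ℱ k] (Pr[ind k | ℱ k]) :=
    fun k => stronglyMeasurable_condExp
  have hp01 : ∀ᵐ ω ∂Pr, ∀ k, 0 ≤ (Pr[ind k | ℱ k]) ω ∧ (Pr[ind k | ℱ k]) ω ≤ 1 := by
    rw [ae_all_iff]
    intro k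
    have h1 : 0 ≤ᵐ[Pr] Pr[ind k | ℱ k] := condExp_nonneg (ae_of_all _ (hind0 k))
    have h2 : Pr[ind k | ℱ k] ≤ᵐ[Pr] Pr[(fun _ => (1:ℝ)) | ℱ k] :=
      condExp_mono (hind_int k) (integrable_const 1) (ae_of_all _ (hind1 k))
    rw [condExp_const (ℱ.le k)] at h2
    filter_upwards [h1, h2] with ω h1 h2 using ⟨h1, h2⟩
  -- induction
  induction n with
  | zero => simp
  | succ n ih =>
    set p : ℕ → Ω → ℝ := fun k => Pr[ind k | ℱ k] with hp_def
    set Fn : Ω → ℝ := fun ω =>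
      (∏ k ∈ Finset.range n, (1 - s * ind k ω)) *
        Real.exp (s * ∑ k ∈ Finset.range n, p k ω) with hFn_def
    set Y : Ω → ℝ := fun ω => Fn ω * Real.exp (s * p n ω) with hY_def
    set W : Ω → ℝ := fun ω => 1 - s * ind n ω with hW_def
    have hfac0 : ∀ k ω, 0 ≤ 1 - s * ind k ω := by
      intro k ω
      nlinarith [hind0 k ω, hind1 k ω]
    have hfac1 : ∀ k ω, 1 - s * ind k ω ≤ 1 := by
      intro k ω
      nlinarith [hind0 k ω]
    have hFn_nonneg : ∀ ω, 0 ≤ Fn ω := fun ω =>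
      mul_nonneg (Finset.prod_nonneg fun k _ => hfac0 k ω) (Real.exp_pos _).le
    have hFn_sm : StronglyMeasurable[ℱ n] Fn := by
      apply StronglyMeasurable.mul
      · exact Finset.stronglyMeasurable_fun_prod _ fun k hk =>
          stronglyMeasurable_const.sub (stronglyMeasurable_const.mul
            ((hind_sm k).mono (ℱ.mono (Finset.mem_range.1 hk))))
      · exact Real.continuous_exp.comp_stronglyMeasurable
          (stronglyMeasurable_const.mul (Finset.stronglyMeasurable_fun_sum _ fun k hk =>
            (hp_sm k).mono (ℱ.mono (Finset.mem_range.1 hk).le)))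
    have hY_sm : StronglyMeasurable[ℱ n] Y :=
      hFn_sm.mul (Real.continuous_exp.comp_stronglyMeasurable
        (stronglyMeasurable_const.mul (hp_sm n)))
    have hFn_le : ∀ᵐ ω ∂Pr, Fn ω ≤ Real.exp (s * n) := by
      filter_upwards [hp01] with ω hω
      have hprod : (∏ k ∈ Finset.range n, (1 - s * ind k ω)) ≤ 1 :=
        Finset.prod_le_one (fun k _ => hfac0 k ω) (fun k _ => hfac1 k ω)
      have hsum : (∑ k ∈ Finset.range n, p k ω) ≤ n := by
        calc (∑ k ∈ Finset.range n, p k ω) ≤ ∑ k ∈ Finset.range n, (1:ℝ) :=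
              Finset.sum_le_sum fun k _ => (hω k).2
          _ = n := by simp
      calc Fn ω ≤ 1 * Real.exp (s * ∑ k ∈ Finset.range n, p k ω) := by
            exact mul_le_mul_of_nonneg_right hprod (Real.exp_pos _).le
        _ ≤ Real.exp (s * n) := by
            rw [one_mul]
            exact Real.exp_le_exp.2 (mul_le_mul_of_nonneg_left hsum hs0.le)
    have hY_le : ∀ᵐ ω ∂Pr, Y ω ≤ Real.exp (s * (n + 1)) := by
      filter_upwards [hFn_le, hp01] with ω h1 h2
      have : Real.exp (s * p n ω) ≤ Real.exp (s * 1) := by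
        exact Real.exp_le_exp.2 (mul_le_mul_of_nonneg_left (h2 n).2 hs0.le)
      calc Y ω ≤ Real.exp (s * n) * Real.exp (s * 1) :=
            mul_le_mul h1 this (Real.exp_pos _).le (Real.exp_pos _).le
        _ = Real.exp (s * (n + 1)) := by rw [← Real.exp_add]; ring_nf
    have hY_nonneg : ∀ ω, 0 ≤ Y ω := fun ω =>
      mul_nonneg (hFn_nonneg ω) (Real.exp_pos _).le
    have hFn_int : Integrable Fn Pr := by
      refine Integrable.mono' (integrable_const (Real.exp (s * n)))
        (hFn_sm.mono (ℱ.le n)).aestronglyMeasurable ?_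
      filter_upwards [hFn_le] with ω hω
      rwa [Real.norm_eq_abs, abs_of_nonneg (hFn_nonneg ω)]
    have hW01 : ∀ ω, 0 ≤ W ω ∧ W ω ≤ 1 := fun ω => ⟨hfac0 n ω, hfac1 n ω⟩
    have hW_int : Integrable W Pr :=
      (integrable_const (1:ℝ)).sub ((hind_int n).const_mul s)
    have hYW_int : Integrable (Y * W) Pr := by
      refine Integrable.mono' (integrable_const (Real.exp (s * (n + 1))))
        (((hY_sm.mono (ℱ.le n)).mul
          (stronglyMeasurable_const.sub (stronglyMeasurable_const.mul
            ((hind_sm n).mono (ℱ.le _))))).aestronglyMeasurable) ?_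
      filter_upwards [hY_le] with ω hω
      rw [Pi.mul_apply, Real.norm_eq_abs,
        abs_of_nonneg (mul_nonneg (hY_nonneg ω) (hW01 ω).1)]
      calc Y ω * W ω ≤ Y ω * 1 :=
            mul_le_mul_of_nonneg_left (hW01 ω).2 (hY_nonneg ω)
        _ ≤ Real.exp (s * (n + 1)) := by rw [mul_one]; exact hω
    -- conditional expectation of W
    have hcW : Pr[W | ℱ n] =ᵐ[Pr] fun ω => 1 - s * p n ω := by
      have h1 : W = (fun _ => (1:ℝ)) - s • ind n := by
        funext ω; simp [hW_def, smul_eq_mul]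
      rw [h1]
      have h2 := condExp_sub (m := ℱ n) (μ := Pr) (integrable_const (1:ℝ))
        ((hind_int n).smul s)
      have h3 := condExp_smul (m := ℱ n) (μ := Pr) s (ind n)
      filter_upwards [h2, h3] with ω h2 h3
      rw [h2, Pi.sub_apply, h3, condExp_const (ℱ.le n), Pi.smul_apply, smul_eq_mul]
    have hpull : Pr[Y * W | ℱ n] =ᵐ[Pr] Y * Pr[W | ℱ n] :=
      condExp_mul_of_stronglyMeasurable_left hY_sm hYW_int hW_int
    -- the rewrite of the goal integrand
    have hrw : (fun ω => (∏ k ∈ Finset.range (n + 1), (1 - s * ind k ω)) *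
        Real.exp (s * ∑ k ∈ Finset.range (n + 1), p k ω)) = fun ω => Y ω * W ω := by
      funext ω
      rw [Finset.prod_range_succ, Finset.sum_range_succ, mul_add, Real.exp_add]
      simp only [hY_def, hFn_def, hW_def]
      ring
    have hG_int : Integrable (fun ω => Y ω * (1 - s * p n ω)) Pr := by
      refine Integrable.mono' (integrable_const (Real.exp (s * (n + 1))))
        (((hY_sm.mono (ℱ.le n)).mul
          (stronglyMeasurable_const.sub (stronglyMeasurable_const.mul
            ((hp_sm n).mono (ℱ.le n))))).aestronglyMeasurable) ?_
      filter_upwards [hY_le, hp01] with ω h1 h2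
      rw [Real.norm_eq_abs, abs_mul, abs_of_nonneg (hY_nonneg ω)]
      have : |1 - s * p n ω| ≤ 1 := by
        rw [abs_le]
        constructor <;> nlinarith [(h2 n).1, (h2 n).2]
      calc Y ω * |1 - s * p n ω| ≤ Y ω * 1 :=
            mul_le_mul_of_nonneg_left this (hY_nonneg ω)
        _ ≤ Real.exp (s * (n + 1)) := by rw [mul_one]; exact h1
    have hGF : (fun ω => Y ω * (1 - s * p n ω)) ≤ᵐ[Pr] Fn := by
      filter_upwards [hp01] with ω hω
      have hx0 : 0 ≤ s * p n ω := mul_nonneg hs0.le (hω n).1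
      have hkey : Real.exp (s * p n ω) * (1 - s * p n ω) ≤ 1 := by
        have h1 := Real.add_one_le_exp (-(s * p n ω))
        have h2 : Real.exp (-(s * p n ω)) * Real.exp (s * p n ω) = 1 := by
          rw [← Real.exp_add]; simp
        nlinarith [Real.exp_pos (s * p n ω)]
      calc Y ω * (1 - s * p n ω) = Fn ω * (Real.exp (s * p n ω) * (1 - s * p n ω)) := by
            simp only [hY_def]; ring
        _ ≤ Fn ω * 1 := mul_le_mul_of_nonneg_left hkey (hFn_nonneg ω)
        _ = Fn ω := mul_one _
    calc ∫ ω, (∏ k ∈ Finset.range (n + 1), (1 - s * ind k ω)) *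
          Real.exp (s * ∑ k ∈ Finset.range (n + 1), p k ω) ∂Pr
        = ∫ ω, (Y * W) ω ∂Pr := by rw [hrw]; rfl
      _ = ∫ ω, (Pr[Y * W | ℱ n]) ω ∂Pr := (integral_condExp (ℱ.le n)).symm
      _ = ∫ ω, Y ω * (1 - s * p n ω) ∂Pr := by
          refine integral_congr_ae ?_
          filter_upwards [hpull, hcW] with ω h1 h2
          rw [h1, Pi.mul_apply, h2]
      _ ≤ ∫ ω, Fn ω ∂Pr := integral_mono_ae hG_int hFn_int hGF
      _ ≤ 1 := ih


lemma chernoff_log_ineq {s : ℝ} (h0 : 0 < s) (h1 : s < 1) :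
    s ^ 2 / 2 ≤ (1 - s) * Real.log (1 - s) + s := by
  have hder : ∀ x : ℝ, x < 1 →
      HasDerivAt (fun y : ℝ => (1 - y) * Real.log (1 - y) + y - y ^ 2 / 2)
        (-Real.log (1 - x) - x) x := by
    intro x hx
    have h1x : (0:ℝ) < 1 - x := by linarith
    have hu : HasDerivAt (fun y : ℝ => 1 - y) (-1) x := (hasDerivAt_id x).const_sub 1
    have hl : HasDerivAt (fun y : ℝ => Real.log (1 - y)) ((1 - x)⁻¹ * (-1)) x :=
      (Real.hasDerivAt_log h1x.ne').comp x hu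
    have hsq : HasDerivAt (fun y : ℝ => y ^ 2 / 2) ((2 * x ^ 1) / 2) x :=
      (hasDerivAt_pow 2 x).div_const 2
    have := ((hu.mul hl).add (hasDerivAt_id x)).sub hsq
    exact this.congr_deriv (by rw [mul_inv_cancel_left₀ h1x.ne']; ring)
  have hmono : MonotoneOn (fun y : ℝ => (1 - y) * Real.log (1 - y) + y - y ^ 2 / 2)
      (Set.Icc 0 s) := by
    apply monotoneOn_of_deriv_nonneg (convex_Icc 0 s)
    · intro x hx
      exact (hder x (by have := hx.2; linarith)).continuousAt.continuousWithinAt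
    · intro x hx
      rw [interior_Icc] at hx
      exact (hder x (by linarith [hx.2])).differentiableAt.differentiableWithinAt
    · intro x hx
      rw [interior_Icc] at hx
      have hx1 : x < 1 := by linarith [hx.2]
      rw [(hder x hx1).deriv]
      have hlog : Real.log (1 - x) ≤ (1 - x) - 1 :=
        Real.log_le_sub_one_of_pos (by linarith)
      linarith
  have h := hmono (Set.left_mem_Icc.2 h0.le) (Set.right_mem_Icc.2 h0.le) h0.le
  simp only [sub_zero, Real.log_one, mul_zero, zero_add] at h
  norm_num at h
  linarith

/-- A Chernoff-type bound for sums of adapted indicators: if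
`A_k ∈ ℱ_{k+1}`, `p_k = Pr(A_k | ℱ_k)` and `∑_{k<T} p_k ≥ μT` a.s. for some `μ ∈ (0,1]`,
then `X = ∑_{k<T} 1_{A_k}` satisfies `Pr(X ≤ (1−s) μT) ≤ exp(−(s²/2) μT)` for `s ∈ (0,1)`. -/
theorem stmt5 {Ω : Type*} {m0 : MeasurableSpace Ω} (Pr : Measure Ω) [IsProbabilityMeasure Pr]
    (ℱ : Filtration ℕ m0) (T : ℕ) (hT : 1 ≤ T)
    (A : ℕ → Set Ω) (hA : ∀ k, MeasurableSet[ℱ (k + 1)] (A k))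
    (μ : ℝ) (hμ : μ ∈ Set.Ioc (0 : ℝ) 1)
    (hsum : ∀ᵐ ω ∂Pr,
      μ * T ≤ ∑ k ∈ Finset.range T, (Pr[(A k).indicator (fun _ => (1 : ℝ)) | ℱ k]) ω)
    (s : ℝ) (hs : s ∈ Set.Ioo (0 : ℝ) 1) :
    Pr {ω | (∑ k ∈ Finset.range T, (A k).indicator (fun _ => (1 : ℝ)) ω) ≤ (1 - s) * (μ * T)}
      ≤ ENNReal.ofReal (Real.exp (-(s ^ 2 / 2) * (μ * T))) := by
  obtain ⟨hs0, hs1⟩ := hs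
  obtain ⟨hμ0, hμ1⟩ := hμ
  have hs1' : (0:ℝ) < 1 - s := by linarith
  have hTpos : (0:ℝ) < T := by exact_mod_cast hT
  have ha : (0:ℝ) < μ * T := mul_pos hμ0 hTpos
  set ind : ℕ → Ω → ℝ := fun k => (A k).indicator (fun _ => (1 : ℝ)) with hind_def
  have hind01 : ∀ k ω, ind k ω = 0 ∨ ind k ω = 1 := by
    intro k ω
    by_cases h : ω ∈ A k
    · right; simp [hind_def, h]
    · left; simp [hind_def, h]
  have hind0 : ∀ k ω, 0 ≤ ind k ω := by
    intro k ω; rcases hind01 k ω with h | h <;> rw [h] <;> norm_num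
  have hind1 : ∀ k ω, ind k ω ≤ 1 := by
    intro k ω; rcases hind01 k ω with h | h <;> rw [h] <;> norm_num
  have hind_sm : ∀ k, StronglyMeasurable[ℱ (k + 1)] (ind k) :=
    fun k => stronglyMeasurable_const.indicator (hA k)
  have hp_sm : ∀ k, StronglyMeasurable[ℱ k] (Pr[ind k | ℱ k]) :=
    fun k => stronglyMeasurable_condExp
  have hind_int : ∀ k, Integrable (ind k) Pr := by
    intro k
    refine Integrable.mono' (integrable_const (1:ℝ))
      ((hind_sm k).mono (ℱ.le _)).aestronglyMeasurable (ae_of_all _ fun ω => ?_)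
    rw [Real.norm_eq_abs, abs_of_nonneg (hind0 k ω)]; exact hind1 k ω
  have hp01 : ∀ᵐ ω ∂Pr, ∀ k, 0 ≤ (Pr[ind k | ℱ k]) ω ∧ (Pr[ind k | ℱ k]) ω ≤ 1 := by
    rw [ae_all_iff]
    intro k
    have h1 : 0 ≤ᵐ[Pr] Pr[ind k | ℱ k] := condExp_nonneg (ae_of_all _ (hind0 k))
    have h2 : Pr[ind k | ℱ k] ≤ᵐ[Pr] Pr[(fun _ => (1:ℝ)) | ℱ k] :=
      condExp_mono (hind_int k) (integrable_const 1) (ae_of_all _ (hind1 k))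
    rw [condExp_const (ℱ.le k)] at h2
    filter_upwards [h1, h2] with ω h1 h2 using ⟨h1, h2⟩
  -- the function F
  set F : Ω → ℝ := fun ω => (∏ k ∈ Finset.range T, (1 - s * ind k ω)) *
    Real.exp (s * ∑ k ∈ Finset.range T, (Pr[ind k | ℱ k]) ω) with hF_def
  have hkey : ∫ ω, F ω ∂Pr ≤ 1 :=
    chernoff_aux_int Pr ℱ ind hind_sm hind0 hind1 hs0 hs1 T
  have hfac0 : ∀ k ω, 0 ≤ 1 - s * ind k ω := by
    intro k ω; nlinarith [hind0 k ω, hind1 k ω]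
  have hfac1 : ∀ k ω, 1 - s * ind k ω ≤ 1 := by
    intro k ω; nlinarith [hind0 k ω]
  have hF_nonneg : ∀ ω, 0 ≤ F ω := fun ω =>
    mul_nonneg (Finset.prod_nonneg fun k _ => hfac0 k ω) (Real.exp_pos _).le
  have hF_sm : StronglyMeasurable F := by
    apply StronglyMeasurable.mul
    · exact Finset.stronglyMeasurable_fun_prod _ fun k hk =>
        stronglyMeasurable_const.sub (stronglyMeasurable_const.mul
          ((hind_sm k).mono (ℱ.le _)))
    · exact Real.continuous_exp.comp_stronglyMeasurable
        (stronglyMeasurable_const.mul (Finset.stronglyMeasurable_fun_sum _ fun k hk =>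
          (hp_sm k).mono (ℱ.le _)))
  have hF_le : ∀ᵐ ω ∂Pr, F ω ≤ Real.exp (s * T) := by
    filter_upwards [hp01] with ω hω
    have hprod : (∏ k ∈ Finset.range T, (1 - s * ind k ω)) ≤ 1 :=
      Finset.prod_le_one (fun k _ => hfac0 k ω) (fun k _ => hfac1 k ω)
    have hsum' : (∑ k ∈ Finset.range T, (Pr[ind k | ℱ k]) ω) ≤ T := by
      calc (∑ k ∈ Finset.range T, (Pr[ind k | ℱ k]) ω) ≤ ∑ k ∈ Finset.range T, (1:ℝ) :=
            Finset.sum_le_sum fun k _ => (hω k).2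
        _ = T := by simp
    calc F ω ≤ 1 * Real.exp (s * ∑ k ∈ Finset.range T, (Pr[ind k | ℱ k]) ω) :=
          mul_le_mul_of_nonneg_right hprod (Real.exp_pos _).le
      _ ≤ Real.exp (s * T) := by
          rw [one_mul]
          exact Real.exp_le_exp.2 (mul_le_mul_of_nonneg_left hsum' hs0.le)
  have hF_int : Integrable F Pr := by
    refine Integrable.mono' (integrable_const (Real.exp (s * T)))
      hF_sm.aestronglyMeasurable ?_
    filter_upwards [hF_le] with ω hω
    rwa [Real.norm_eq_abs, abs_of_nonneg (hF_nonneg ω)]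
  -- the event
  set E : Set Ω := {ω | (∑ k ∈ Finset.range T, ind k ω) ≤ (1 - s) * (μ * T)} with hE_def
  have hE_meas : MeasurableSet E := by
    have : Measurable fun ω => ∑ k ∈ Finset.range T, ind k ω :=
      Finset.measurable_sum _ fun k _ => ((hind_sm k).mono (ℱ.le _)).measurable
    exact measurableSet_le this measurable_const
  -- product identity
  have hc_neg : Real.log (1 - s) < 0 := Real.log_neg hs1' (by linarith)
  have hprod_eq : ∀ ω, (∏ k ∈ Finset.range T, (1 - s * ind k ω)) =
      Real.exp (Real.log (1 - s) * ∑ k ∈ Finset.range T, ind k ω) := by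
    intro ω
    rw [Finset.mul_sum, Real.exp_sum]
    refine Finset.prod_congr rfl fun k _ => ?_
    rcases hind01 k ω with h | h <;> rw [h]
    · simp
    · rw [mul_one, mul_one, Real.exp_log hs1']
  set B : ℝ := Real.exp (Real.log (1 - s) * ((1 - s) * (μ * T)) + s * (μ * T)) with hB_def
  have hBpos : 0 < B := Real.exp_pos _
  have hlow : ∀ᵐ ω ∂Pr, ω ∈ E → B ≤ F ω := by
    filter_upwards [hsum] with ω hω hmem
    have hmem' : (∑ k ∈ Finset.range T, ind k ω) ≤ (1 - s) * (μ * T) := hmem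
    have h1 : Real.log (1 - s) * ((1 - s) * (μ * T)) ≤
        Real.log (1 - s) * ∑ k ∈ Finset.range T, ind k ω :=
      mul_le_mul_of_nonpos_left hmem' hc_neg.le
    have h2 : s * (μ * T) ≤ s * ∑ k ∈ Finset.range T, (Pr[ind k | ℱ k]) ω :=
      mul_le_mul_of_nonneg_left hω hs0.le
    have : F ω = Real.exp (Real.log (1 - s) * ∑ k ∈ Finset.range T, ind k ω +
        s * ∑ k ∈ Finset.range T, (Pr[ind k | ℱ k]) ω) := by
      rw [hF_def]
      simp only
      rw [hprod_eq ω, Real.exp_add]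
    rw [this, hB_def]
    exact Real.exp_le_exp.2 (by linarith)
  -- Markov
  have hmark : B * (Pr E).toReal ≤ 1 := by
    calc B * (Pr E).toReal = ∫ _ in E, B ∂Pr := by
          rw [setIntegral_const, smul_eq_mul, measureReal_def]; ring
      _ ≤ ∫ ω in E, F ω ∂Pr := by
          refine setIntegral_mono_ae_restrict
            (integrableOn_const (measure_lt_top _ _).ne)
            hF_int.integrableOn ?_
          rw [Filter.EventuallyLE, ae_restrict_iff' hE_meas]
          filter_upwards [hlow] with ω h hmem using h hmem
      _ ≤ ∫ ω, F ω ∂Pr := setIntegral_le_integral hF_int (ae_of_all _ hF_nonneg)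
      _ ≤ 1 := hkey
  have htor : (Pr E).toReal ≤ 1 / B := by
    rw [le_div_iff₀ hBpos]; linarith
  have h1B : 1 / B = Real.exp (-(Real.log (1 - s) * ((1 - s) * (μ * T)) + s * (μ * T))) := by
    rw [Real.exp_neg, hB_def, one_div]
  have hfin : -(Real.log (1 - s) * ((1 - s) * (μ * T)) + s * (μ * T)) ≤
      -(s ^ 2 / 2) * (μ * T) := by
    have hkey2 : s ^ 2 / 2 ≤ (1 - s) * Real.log (1 - s) + s := chernoff_log_ineq hs0 hs1
    nlinarith [ha]
  calc Pr E = ENNReal.ofReal (Pr E).toReal :=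
        (ENNReal.ofReal_toReal (measure_ne_top Pr E)).symm
    _ ≤ ENNReal.ofReal (1 / B) := ENNReal.ofReal_le_ofReal htor
    _ ≤ ENNReal.ofReal (Real.exp (-(s ^ 2 / 2) * (μ * T))) := by
        refine ENNReal.ofReal_le_ofReal ?_
        rw [h1B]
        exact Real.exp_le_exp.2 hfin
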